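/- Let f : ℝ^d → ℝ be differentiable and M-smooth, and let z̄ ∈ ℝ^d be a stationary point of f. Let u ∼ s where s is standardized with fourth moment κ = E[u₁⁴] < ∞ (and κ ≥ 1), let T_w(u) = Cu + m, and let g = ∇_w f(T_w(u)) with respect to all d + d² parameters w = (m, C). Define w̄ = (z̄, 0_{d×d}), so that ‖w − w̄‖₂² = ‖m − z̄‖₂² + ‖C‖_F². Then E‖g‖₂² ≤ (d+κ) M² ‖w − w̄‖₂². -/

import Mathlib

noncomputable section

open MeasureTheory ProbabilityTheory
open scoped RealInnerProductSpace

/-- The affine reparameterization map `T_w(u) = C u + m`, where the parameter vector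
`w ∈ ℝ^{d+d²}` collects the entries of `m` (at indices `Sum.inl i`) and of `C`
(at indices `Sum.inr (i, j)`). -/
def Tmap {d : ℕ} (w : EuclideanSpace ℝ (Fin d ⊕ Fin d × Fin d))
    (u : EuclideanSpace ℝ (Fin d)) : EuclideanSpace ℝ (Fin d) :=
  (WithLp.equiv 2 _).symm fun i => (∑ j, w (Sum.inr (i, j)) * u j) + w (Sum.inl i)

/-- The parameter vector `w = (m, C) ∈ ℝ^{d+d²}`. -/
def param {d : ℕ} (m : EuclideanSpace ℝ (Fin d)) (C : Matrix (Fin d) (Fin d) ℝ) :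
    EuclideanSpace ℝ (Fin d ⊕ Fin d × Fin d) :=
  (WithLp.equiv 2 _).symm (Sum.elim (fun i => m i) fun p => C p.1 p.2)


lemma esq {ι : Type*} [Fintype ι] (x : EuclideanSpace ℝ ι) : ‖x‖ ^ 2 = ∑ i, x i ^ 2 := by
  rw [EuclideanSpace.norm_eq, Real.sq_sqrt (by positivity)]
  simp [sq_abs]

def Tlin {d : ℕ} (u : EuclideanSpace ℝ (Fin d)) :
    EuclideanSpace ℝ (Fin d ⊕ Fin d × Fin d) →L[ℝ] EuclideanSpace ℝ (Fin d) :=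
  LinearMap.toContinuousLinearMap
  { toFun := fun w => Tmap w u
    map_add' := by
      intro w w'
      ext i
      simp [Tmap, Finset.sum_add_distrib, add_mul]
      ring
    map_smul' := by
      intro c w
      ext i
      simp only [Tmap, WithLp.equiv_symm_apply, PiLp.toLp_apply, PiLp.smul_apply, smul_eq_mul,
        RingHom.id_apply, mul_add, Finset.mul_sum]
      congr 1
      exact Finset.sum_congr rfl fun j _ => by ring }

lemma Tlin_apply {d : ℕ} (u : EuclideanSpace ℝ (Fin d)) (w) : Tlin u w = Tmap w u := rfl

lemma grad_comp {d : ℕ} (f : EuclideanSpace ℝ (Fin d) → ℝ) (hf : Differentiable ℝ f)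
    (v : EuclideanSpace ℝ (Fin d)) (w : EuclideanSpace ℝ (Fin d ⊕ Fin d × Fin d)) :
    gradient (fun w' => f (Tmap w' v)) w =
      (WithLp.equiv 2 _).symm (Sum.elim (fun i => gradient f (Tmap w v) i)
        (fun p => gradient f (Tmap w v) p.1 * v p.2)) := by
  set y := Tmap w v
  set G : EuclideanSpace ℝ (Fin d ⊕ Fin d × Fin d) :=
    (WithLp.equiv 2 _).symm (Sum.elim (fun i => gradient f y i)
      (fun p => gradient f y p.1 * v p.2))
  have hF : HasFDerivAt (fun w' => f (Tmap w' v)) ((fderiv ℝ f y).comp (Tlin v)) w :=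
    (hf y).hasFDerivAt.comp w (Tlin v).hasFDerivAt
  have hfd : fderiv ℝ f y = (InnerProductSpace.toDual ℝ _) (gradient f y) := by
    simp [gradient]
  have key : (fderiv ℝ f y).comp (Tlin v) = (InnerProductSpace.toDual ℝ _) G := by
    ext1 h
    rw [hfd]
    simp only [ContinuousLinearMap.comp_apply, InnerProductSpace.toDual_apply_apply]
    rw [Tlin_apply]
    simp only [PiLp.inner_apply, RCLike.inner_apply, conj_trivial]
    rw [Fintype.sum_sum_type]
    simp only [Tmap, G, WithLp.equiv_symm_apply, PiLp.toLp_apply, Sum.elim_inl, Sum.elim_inr]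
    rw [Fintype.sum_prod_type]
    rw [← Finset.sum_add_distrib]
    refine Finset.sum_congr rfl fun i _ => ?_
    rw [add_mul, Finset.sum_mul, add_comm]
    congr 1
    exact Finset.sum_congr rfl fun j _ => by ring
  have : HasGradientAt (fun w' => f (Tmap w' v)) G w := by
    rw [hasGradientAt_iff_hasFDerivAt, ← key]
    exact hF
  exact this.gradient

section AuxProb
open scoped ENNReal


variable {Ω : Type*} [MeasurableSpace Ω] (μ : Measure Ω) [IsProbabilityMeasure μ]

lemma ehalf : (1:ℝ≥0∞)/1 = 1/2 + 1/2 := by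
  rw [one_div, one_div, inv_one]; exact ENNReal.inv_two_add_inv_two.symm

lemma equarter : (1:ℝ≥0∞)/2 = 1/4 + 1/4 := by
  have h4 : (4:ℝ≥0∞)⁻¹ = 2⁻¹/2 := by
    rw [ENNReal.div_eq_inv_mul, ← ENNReal.mul_inv (by norm_num) (by norm_num)]
    norm_num
  rw [one_div, one_div, h4, ENNReal.add_halves]

lemma hprod2 {X Y : Ω → ℝ} (hX : MemLp X 2 μ) (hY : MemLp Y 2 μ) :
    Integrable (fun ω => X ω * Y ω) μ := by
  haveI : ENNReal.HolderTriple 2 2 1 := ⟨by rw [inv_one]; exact ENNReal.inv_two_add_inv_two⟩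
  have := hY.smul hX (r := 1)
  rwa [memLp_one_iff_integrable] at this

/-- generic expansion of `∫ W * (∑ c u + e)^2`. -/
lemma key_expand (d : ℕ) (u : Ω → EuclideanSpace ℝ (Fin d))
    (W : Ω → ℝ) (c : Fin d → ℝ) (e : ℝ) (hW : Integrable W μ)
    (hW2 : ∀ j l, Integrable (fun ω => W ω * (u ω j * u ω l)) μ)
    (hW1 : ∀ j, Integrable (fun ω => W ω * u ω j) μ) :
    Integrable (fun ω => W ω * (∑ j, c j * u ω j + e) ^ 2) μ ∧
    ∫ ω, W ω * (∑ j, c j * u ω j + e) ^ 2 ∂μ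
      = (∑ j, ∑ l, (c j * c l) * ∫ ω, W ω * (u ω j * u ω l) ∂μ)
        + (2 * e * ∑ j, c j * ∫ ω, W ω * u ω j ∂μ) + e ^ 2 * ∫ ω, W ω ∂μ := by
  have hA : ∀ ω, W ω * (∑ j, c j * u ω j) ^ 2
      = ∑ j, ∑ l, (c j * c l) * (W ω * (u ω j * u ω l)) := by
    intro ω
    rw [pow_two, Finset.sum_mul_sum, Finset.mul_sum]
    refine Finset.sum_congr rfl fun j _ => ?_
    rw [Finset.mul_sum]
    exact Finset.sum_congr rfl fun l _ => by ring
  have hB : ∀ ω, W ω * (∑ j, c j * u ω j) = ∑ j, c j * (W ω * u ω j) := by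
    intro ω
    rw [Finset.mul_sum]
    exact Finset.sum_congr rfl fun j _ => by ring
  have hpt : ∀ ω, W ω * (∑ j, c j * u ω j + e) ^ 2
      = (∑ j, ∑ l, (c j * c l) * (W ω * (u ω j * u ω l)))
        + (2 * e * (∑ j, c j * (W ω * u ω j)) + e ^ 2 * W ω) := by
    intro ω
    linear_combination hA ω + 2 * e * hB ω
  have hI1 : Integrable (fun ω => ∑ j, ∑ l, (c j * c l) * (W ω * (u ω j * u ω l))) μ :=
    integrable_finset_sum _ fun j _ => integrable_finset_sum _ fun l _ => (hW2 j l).const_mul _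
  have hI2 : Integrable (fun ω => 2 * e * (∑ j, c j * (W ω * u ω j))) μ :=
    (integrable_finset_sum _ fun j _ => (hW1 j).const_mul _).const_mul _
  have hI3 : Integrable (fun ω => e ^ 2 * W ω) μ := hW.const_mul _
  have hI23 : Integrable (fun ω => 2 * e * (∑ j, c j * (W ω * u ω j)) + e ^ 2 * W ω) μ :=
    hI2.add hI3
  constructor
  · exact ((hI1.add hI23).congr
      (Filter.Eventually.of_forall fun ω => (hpt ω).symm))
  · rw [integral_congr_ae (Filter.Eventually.of_forall hpt)]
    rw [integral_add hI1 hI23, integral_add hI2 hI3, integral_const_mul,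
      integral_const_mul, ← add_assoc,
      integral_finset_sum _ (fun j _ => integrable_finset_sum _ fun l _ => (hW2 j l).const_mul _),
      integral_finset_sum _ (fun j _ => (hW1 j).const_mul _)]
    have e1 : ∀ j : Fin d, ∫ a, ∑ l, (c j * c l) * (W a * (u a j * u a l)) ∂μ
        = ∑ l, (c j * c l) * ∫ ω, W ω * (u ω j * u ω l) ∂μ := by
      intro j
      rw [integral_finset_sum _ (fun l _ => (hW2 j l).const_mul _)]
      exact Finset.sum_congr rfl fun l _ => integral_const_mul _ _
    have e2 : ∀ j : Fin d, ∫ a, c j * (W a * u a j) ∂μ = c j * ∫ ω, W ω * u ω j ∂μ :=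
      fun j => integral_const_mul _ _
    rw [Finset.sum_congr rfl fun j _ => e1 j, Finset.sum_congr rfl fun j _ => e2 j]

lemma moments (d : ℕ) (hd : 0 < d) (u : Ω → EuclideanSpace ℝ (Fin d))
    (hmeas : ∀ i, Measurable fun ω => u ω i)
    (hindep : iIndepFun (fun i ω => u ω i) μ)
    (hident : ∀ i j : Fin d, IdentDistrib (fun ω => u ω i) (fun ω => u ω j) μ μ)
    (hmean : ∀ i, ∫ ω, u ω i ∂μ = 0)
    (hthird : ∀ i, ∫ ω, u ω i ^ 3 ∂μ = 0)
    (hvar : ∀ i, ∫ ω, u ω i ^ 2 ∂μ = 1)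
    (hL4 : ∀ i, MemLp (fun ω => u ω i) 4 μ)
    (κ : ℝ) (hκ : κ = ∫ ω, u ω ⟨0, hd⟩ ^ 4 ∂μ) :
    (∀ j l, ∫ ω, u ω j * u ω l ∂μ = if j = l then 1 else 0) ∧
    (∀ k j, ∫ ω, u ω k ^ 2 * u ω j ∂μ = 0) ∧
    (∀ k j l, ∫ ω, u ω k ^ 2 * (u ω j * u ω l) ∂μ
      = if j = l then (if j = k then κ else 1) else 0) := by
  have hL2 : ∀ i, MemLp (fun ω => u ω i) 2 μ :=
    fun i => (hL4 i).mono_exponent (by norm_num)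
  have hm2 : ∀ i j, MemLp (fun ω => u ω i * u ω j) 2 μ :=
    fun i j => haveI : ENNReal.HolderTriple 4 4 2 := ⟨by simpa only [one_div] using equarter.symm⟩; (hL4 j).smul (hL4 i) (r := 2)
  have hsq2 : ∀ i, MemLp (fun ω => u ω i ^ 2) 2 μ := by
    intro i; have := hm2 i i; simpa only [← pow_two] using this
  have i1 : ∀ j, Integrable (fun ω => u ω j) μ := fun j => (hL4 j).integrable (by norm_num)
  have i11 : ∀ j l, Integrable (fun ω => u ω j * u ω l) μ := fun j l => hprod2 μ (hL2 j) (hL2 l)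
  have i2 : ∀ k, Integrable (fun ω => u ω k ^ 2) μ := by
    intro k; simpa only [← pow_two] using i11 k k
  have i21 : ∀ k j, Integrable (fun ω => u ω k ^ 2 * u ω j) μ :=
    fun k j => hprod2 μ (hsq2 k) (hL2 j)
  have i3 : ∀ k, Integrable (fun ω => u ω k ^ 3) μ := by
    intro k; simpa only [← pow_succ] using i21 k k
  refine ⟨?_, ?_, ?_⟩
  · intro j l
    by_cases h : j = l
    · subst h; simpa only [← pow_two, if_pos rfl, ↓reduceIte] using hvar j
    · rw [if_neg h]
      have h' : ∫ ω, u ω j * u ω l ∂μ = (∫ ω, u ω j ∂μ) * ∫ ω, u ω l ∂μ :=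
        (hindep.indepFun h).integral_fun_mul_eq_mul_integral (i1 j).1 (i1 l).1
      rw [h', hmean j, zero_mul]
  · intro k j
    by_cases h : k = j
    · subst h; simpa only [← pow_succ] using hthird k
    · have h' : ∫ ω, u ω k ^ 2 * u ω j ∂μ = (∫ ω, u ω k ^ 2 ∂μ) * ∫ ω, u ω j ∂μ :=
        ((hindep.indepFun h).comp (measurable_id.pow_const 2)
          measurable_id).integral_fun_mul_eq_mul_integral (i2 k).1 (i1 j).1
      rw [h', hmean j, mul_zero]
  · intro k j l
    have M4 : ∀ k : Fin d, ∫ ω, u ω k ^ 4 ∂μ = κ := by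
      intro k'
      rw [hκ]
      have := ((hident k' ⟨0, hd⟩).comp (measurable_id.pow_const 4)).integral_eq
      simpa using this
    by_cases hjl : j = l
    · subst hjl
      rw [if_pos rfl]
      by_cases hjk : j = k
      · subst hjk
        rw [if_pos rfl]
        have hptw : ∀ x : ℝ, x ^ 2 * (x * x) = x ^ 4 := fun x => by ring
        simp only [hptw]
        exact M4 j
      · rw [if_neg hjk]
        have h' : ∫ ω, u ω k ^ 2 * u ω j ^ 2 ∂μ = (∫ ω, u ω k ^ 2 ∂μ) * ∫ ω, u ω j ^ 2 ∂μ :=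
          ((hindep.indepFun (fun h => hjk h.symm : k ≠ j)).comp
            (measurable_id.pow_const 2) (measurable_id.pow_const 2)).integral_fun_mul_eq_mul_integral
            (i2 k).1 (i2 j).1
        simp only [← pow_two]
        rw [h', hvar k, hvar j, mul_one]
    · rw [if_neg hjl]
      by_cases hjk : j = k
      · subst hjk
        have hptw : ∀ x y : ℝ, x ^ 2 * (x * y) = x ^ 3 * y := fun x y => by ring
        simp only [hptw]
        have h' : ∫ ω, u ω j ^ 3 * u ω l ∂μ = (∫ ω, u ω j ^ 3 ∂μ) * ∫ ω, u ω l ∂μ :=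
          ((hindep.indepFun (fun h => hjl h : j ≠ l)).comp
            (measurable_id.pow_const 3) measurable_id).integral_fun_mul_eq_mul_integral (i3 j).1 (i1 l).1
        rw [h', hmean l, mul_zero]
      · by_cases hlk : l = k
        · subst hlk
          have hptw : ∀ x y : ℝ, x ^ 2 * (y * x) = x ^ 3 * y := fun x y => by ring
          simp only [hptw]
          have h' : ∫ ω, u ω l ^ 3 * u ω j ∂μ = (∫ ω, u ω l ^ 3 ∂μ) * ∫ ω, u ω j ∂μ :=
            ((hindep.indepFun (fun h => hjk h.symm : l ≠ j)).comp
              (measurable_id.pow_const 3) measurable_id).integral_fun_mul_eq_mul_integral (i3 l).1 (i1 j).1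
          rw [h', hmean j, mul_zero]
        · have hind := (hindep.indepFun_prodMk hmeas j l k hjk hlk).comp
            (measurable_fst.mul measurable_snd) (measurable_id.pow_const 2)
          have h' : ∫ ω, u ω j * u ω l * u ω k ^ 2 ∂μ
              = (∫ ω, u ω j * u ω l ∂μ) * ∫ ω, u ω k ^ 2 ∂μ :=
            hind.integral_fun_mul_eq_mul_integral (i11 j l).1 (i2 k).1
          have hcomm : ∀ ω : Ω, u ω k ^ 2 * (u ω j * u ω l) = u ω j * u ω l * u ω k ^ 2 :=
            fun ω => by ring
          simp only [hcomm]
          rw [h']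
          have hjl0 : ∫ ω, u ω j * u ω l ∂μ = 0 := by
            have h2 : ∫ ω, u ω j * u ω l ∂μ = (∫ ω, u ω j ∂μ) * ∫ ω, u ω l ∂μ :=
              (hindep.indepFun hjl).integral_fun_mul_eq_mul_integral (i1 j).1 (i1 l).1
            rw [h2, hmean j, zero_mul]
          rw [hjl0, zero_mul]

lemma exp_eq (d : ℕ) (hd : 0 < d) (u : Ω → EuclideanSpace ℝ (Fin d))
    (hmeas : ∀ i, Measurable fun ω => u ω i)
    (hindep : iIndepFun (fun i ω => u ω i) μ)
    (hident : ∀ i j : Fin d, IdentDistrib (fun ω => u ω i) (fun ω => u ω j) μ μ)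
    (hmean : ∀ i, ∫ ω, u ω i ∂μ = 0)
    (hthird : ∀ i, ∫ ω, u ω i ^ 3 ∂μ = 0)
    (hvar : ∀ i, ∫ ω, u ω i ^ 2 ∂μ = 1)
    (hL4 : ∀ i, MemLp (fun ω => u ω i) 4 μ)
    (κ : ℝ) (hκ : κ = ∫ ω, u ω ⟨0, hd⟩ ^ 4 ∂μ)
    (C : Matrix (Fin d) (Fin d) ℝ) (v : Fin d → ℝ) :
    Integrable (fun ω => (1 + ∑ k, u ω k ^ 2) * ∑ i, (∑ j, C i j * u ω j + v i) ^ 2) μ ∧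
    ∫ ω, (1 + ∑ k, u ω k ^ 2) * ∑ i, (∑ j, C i j * u ω j + v i) ^ 2 ∂μ
      = ((d : ℝ) + 1) * ∑ i, v i ^ 2 + ((d : ℝ) + κ) * ∑ i, ∑ j, C i j ^ 2 := by
  obtain ⟨M1, M2, M3⟩ := moments μ d hd u hmeas hindep hident hmean hthird hvar hL4 κ hκ
  have hL2 : ∀ i, MemLp (fun ω => u ω i) 2 μ :=
    fun i => (hL4 i).mono_exponent (by norm_num)
  have hm2 : ∀ i j, MemLp (fun ω => u ω i * u ω j) 2 μ :=
    fun i j => haveI : ENNReal.HolderTriple 4 4 2 := ⟨by simpa only [one_div] using equarter.symm⟩; (hL4 j).smul (hL4 i) (r := 2)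
  have hsq2 : ∀ i, MemLp (fun ω => u ω i ^ 2) 2 μ := by
    intro i; have := hm2 i i; simpa only [← pow_two] using this
  have i1 : ∀ j, Integrable (fun ω => u ω j) μ := fun j => (hL4 j).integrable (by norm_num)
  have i11 : ∀ j l, Integrable (fun ω => u ω j * u ω l) μ := fun j l => hprod2 μ (hL2 j) (hL2 l)
  have i2 : ∀ k, Integrable (fun ω => u ω k ^ 2) μ := by
    intro k; simpa only [← pow_two] using i11 k k
  have i21 : ∀ k j, Integrable (fun ω => u ω k ^ 2 * u ω j) μ :=
    fun k j => hprod2 μ (hsq2 k) (hL2 j)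
  have i211 : ∀ k j l, Integrable (fun ω => u ω k ^ 2 * (u ω j * u ω l)) μ :=
    fun k j l => hprod2 μ (hsq2 k) (hm2 j l)
  have keyA : ∀ i, _ := fun i : Fin d =>
    key_expand μ d u (fun _ => (1:ℝ)) (fun j => C i j) (v i) (integrable_const 1)
      (fun j l => by simpa only [one_mul] using i11 j l)
      (fun j => by simpa only [one_mul] using i1 j)
  have keyB : ∀ k i, _ := fun k i : Fin d =>
    key_expand μ d u (fun ω => u ω k ^ 2) (fun j => C i j) (v i) (i2 k) (i211 k) (i21 k)
  have valA : ∀ i, ∫ ω, (1:ℝ) * (∑ j, C i j * u ω j + v i) ^ 2 ∂μ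
      = (∑ j, C i j ^ 2) + v i ^ 2 := by
    intro i
    rw [(keyA i).2]
    simp only [one_mul, M1, hmean, mul_zero, Finset.sum_const_zero, mul_ite, mul_one,
      integral_const, measure_univ, probReal_univ, ENNReal.toReal_one, smul_eq_mul, Finset.sum_ite_eq,
      Finset.mem_univ, if_true, add_zero]
    simp only [← pow_two]
  have valB : ∀ k i, ∫ ω, u ω k ^ 2 * (∑ j, C i j * u ω j + v i) ^ 2 ∂μ
      = (∑ j, C i j ^ 2) + (κ - 1) * C i k ^ 2 + v i ^ 2 := by
    intro k i
    rw [(keyB k i).2]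
    simp only [M3, M2, mul_zero, Finset.sum_const_zero, mul_ite, mul_one, hvar,
      Finset.sum_ite_eq, Finset.mem_univ, if_true, add_zero, mul_one]
    have split : ∀ x, (if x = k then C i x * C i x * κ else C i x * C i x)
        = C i x ^ 2 + (if x = k then (κ - 1) * C i x ^ 2 else 0) := by
      intro x; by_cases h : x = k <;> simp [h] <;> ring
    rw [Finset.sum_congr rfl fun x _ => split x, Finset.sum_add_distrib,
      Finset.sum_ite_eq' Finset.univ k fun x => (κ - 1) * C i x ^ 2]
    simp only [Finset.mem_univ, if_true]
    try ring
  have h1 : ∀ ω, (1 + ∑ k, u ω k ^ 2) * ∑ i, (∑ j, C i j * u ω j + v i) ^ 2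
      = (∑ i, (1:ℝ) * (∑ j, C i j * u ω j + v i) ^ 2)
        + ∑ k, ∑ i, u ω k ^ 2 * (∑ j, C i j * u ω j + v i) ^ 2 := by
    intro ω
    rw [add_mul, one_mul, Finset.sum_mul]
    congr 1
    · exact Finset.sum_congr rfl fun i _ => (one_mul _).symm
    · exact Finset.sum_congr rfl fun k _ => Finset.mul_sum _ _ _
  have hIA : Integrable (fun ω => ∑ i, (1:ℝ) * (∑ j, C i j * u ω j + v i) ^ 2) μ :=
    integrable_finset_sum _ fun i _ => (keyA i).1
  have hIB : Integrable
      (fun ω => ∑ k, ∑ i, u ω k ^ 2 * (∑ j, C i j * u ω j + v i) ^ 2) μ :=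
    integrable_finset_sum _ fun k _ => integrable_finset_sum _ fun i _ => (keyB k i).1
  constructor
  · exact (hIA.add hIB).congr (Filter.Eventually.of_forall fun ω => (h1 ω).symm)
  · rw [integral_congr_ae (Filter.Eventually.of_forall h1), integral_add hIA hIB,
      integral_finset_sum _ (fun i _ => (keyA i).1),
      integral_finset_sum _ (fun k _ => integrable_finset_sum _ fun i _ => (keyB k i).1)]
    have hBint : ∀ k : Fin d, ∫ ω, ∑ i, u ω k ^ 2 * (∑ j, C i j * u ω j + v i) ^ 2 ∂μ
        = ∑ i, ((∑ j, C i j ^ 2) + (κ - 1) * C i k ^ 2 + v i ^ 2) := by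
      intro k
      rw [integral_finset_sum _ (fun i _ => (keyB k i).1)]
      exact Finset.sum_congr rfl fun i _ => valB k i
    rw [Finset.sum_congr rfl fun i _ => valA i, Finset.sum_congr rfl fun k _ => hBint k]
    have hsplit : ∀ k : Fin d, ∑ i, ((∑ j, C i j ^ 2) + (κ - 1) * C i k ^ 2 + v i ^ 2)
        = ((∑ i, ∑ j, C i j ^ 2) + ∑ i, v i ^ 2) + (κ - 1) * ∑ i, C i k ^ 2 := by
      intro k
      rw [Finset.sum_add_distrib, Finset.sum_add_distrib, ← Finset.mul_sum]
      ring
    rw [Finset.sum_congr rfl fun k _ => hsplit k]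
    have hcomm : ∑ k : Fin d, ∑ i, C i k ^ 2 = ∑ i, ∑ j, C i j ^ 2 := Finset.sum_comm
    have hstep : ∑ k : Fin d, ((∑ i, ∑ j, C i j ^ 2) + (∑ i, v i ^ 2) + (κ - 1) * ∑ i, C i k ^ 2)
        = (d : ℝ) * ((∑ i, ∑ j, C i j ^ 2) + ∑ i, v i ^ 2)
          + (κ - 1) * ∑ i, ∑ j, C i j ^ 2 := by
      rw [Finset.sum_add_distrib, Finset.sum_const, ← Finset.mul_sum, hcomm,
        Finset.card_univ, Fintype.card_fin, nsmul_eq_mul]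
    rw [hstep, Finset.sum_add_distrib]
    ring

end AuxProb

/-- with `w̄ = (z̄, 0_{d×d})` one has
`‖w − w̄‖₂² = ‖m − z̄‖₂² + ‖C‖_F²`, and if `f` is `M`-smooth with stationary point `z̄`
and `u` is standardized with fourth moment `κ ≥ 1`, then
`E‖g‖₂² ≤ (d+κ) M² ‖w − w̄‖₂²` for `g = ∇_w f(T_w(u))`. -/
theorem stmt_8 {Ω : Type*} [MeasurableSpace Ω] (μ : Measure Ω) [IsProbabilityMeasure μ]
    (d : ℕ) (hd : 0 < d) (u : Ω → EuclideanSpace ℝ (Fin d))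
    (hmeas : ∀ i, Measurable fun ω => u ω i)
    (hindep : iIndepFun (fun i ω => u ω i) μ)
    (hident : ∀ i j : Fin d, IdentDistrib (fun ω => u ω i) (fun ω => u ω j) μ μ)
    (hmean : ∀ i, ∫ ω, u ω i ∂μ = 0)
    (hthird : ∀ i, ∫ ω, u ω i ^ 3 ∂μ = 0)
    (hvar : ∀ i, ∫ ω, u ω i ^ 2 ∂μ = 1)
    (hL4 : ∀ i, MemLp (fun ω => u ω i) 4 μ)
    (κ : ℝ) (hκ : κ = ∫ ω, u ω ⟨0, hd⟩ ^ 4 ∂μ) (hκ1 : 1 ≤ κ)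
    (f : EuclideanSpace ℝ (Fin d) → ℝ) (hf : Differentiable ℝ f)
    (M : ℝ) (hM : 0 ≤ M)
    (hsmooth : ∀ y z : EuclideanSpace ℝ (Fin d),
      ‖gradient f y - gradient f z‖ ≤ M * ‖y - z‖)
    (zbar : EuclideanSpace ℝ (Fin d)) (hstat : gradient f zbar = 0)
    (m : EuclideanSpace ℝ (Fin d)) (C : Matrix (Fin d) (Fin d) ℝ) :
    ‖param m C - param zbar 0‖ ^ 2 = ‖m - zbar‖ ^ 2 + ∑ i, ∑ j, C i j ^ 2 ∧
    ∫ ω, ‖gradient (fun w' => f (Tmap w' (u ω))) (param m C)‖ ^ 2 ∂μ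
      ≤ ((d : ℝ) + κ) * M ^ 2 * ‖param m C - param zbar 0‖ ^ 2 := by
  classical
  set v : Fin d → ℝ := fun i => m i - zbar i with hv
  have part1 : ‖param m C - param zbar 0‖ ^ 2 = ‖m - zbar‖ ^ 2 + ∑ i, ∑ j, C i j ^ 2 := by
    rw [esq, esq, Fintype.sum_sum_type, Fintype.sum_prod_type]
    have eA : ∀ i : Fin d, (param m C - param zbar 0) (Sum.inl i) = m i - zbar i := by
      intro i; simp [param, PiLp.sub_apply]
    have eB : ∀ p : Fin d × Fin d, (param m C - param zbar 0) (Sum.inr p) = C p.1 p.2 := by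
      intro p; simp [param, PiLp.sub_apply]
    simp only [eA, eB, PiLp.sub_apply]
  refine ⟨part1, ?_⟩
  set y : Ω → EuclideanSpace ℝ (Fin d) := fun ω => Tmap (param m C) (u ω) with hy
  have hyi : ∀ ω i, y ω i = ∑ j, C i j * u ω j + m i := by
    intro ω i
    simp [hy, Tmap, param]
  have hgradsq : ∀ ω, ‖gradient (fun w' => f (Tmap w' (u ω))) (param m C)‖ ^ 2
      = (1 + ∑ k, u ω k ^ 2) * ‖gradient f (y ω)‖ ^ 2 := by
    intro ω
    rw [grad_comp f hf (u ω) (param m C)]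
    rw [esq, esq, Fintype.sum_sum_type, Fintype.sum_prod_type]
    simp only [WithLp.equiv_symm_apply, PiLp.toLp_apply, Sum.elim_inl, Sum.elim_inr]
    have hq : ∑ i, ∑ j, (gradient f (y ω) i * u ω j) ^ 2
        = (∑ k, u ω k ^ 2) * ∑ i, gradient f (y ω) i ^ 2 := by
      rw [Finset.sum_comm, Finset.sum_mul]
      refine Finset.sum_congr rfl fun j _ => ?_
      rw [Finset.mul_sum]
      exact Finset.sum_congr rfl fun i _ => by ring
    rw [hq]
    ring
  have hsm : ∀ ω, ‖gradient f (y ω)‖ ^ 2 ≤ M ^ 2 * ‖y ω - zbar‖ ^ 2 := by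
    intro ω
    have h := hsmooth (y ω) zbar
    rw [hstat, sub_zero] at h
    have h2 : ‖gradient f (y ω)‖ ^ 2 ≤ (M * ‖y ω - zbar‖) ^ 2 :=
      pow_le_pow_left₀ (norm_nonneg _) h 2
    calc ‖gradient f (y ω)‖ ^ 2 ≤ (M * ‖y ω - zbar‖) ^ 2 := h2
      _ = M ^ 2 * ‖y ω - zbar‖ ^ 2 := by ring
  have hnormy : ∀ ω, ‖y ω - zbar‖ ^ 2 = ∑ i, (∑ j, C i j * u ω j + v i) ^ 2 := by
    intro ω
    rw [esq]
    refine Finset.sum_congr rfl fun i _ => ?_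
    have : (y ω - zbar) i = y ω i - zbar i := rfl
    rw [this, hyi]
    simp only [hv]
    ring
  obtain ⟨hInt, hVal⟩ :=
    exp_eq μ d hd u hmeas hindep hident hmean hthird hvar hL4 κ hκ C v
  have hmono : ∫ ω, ‖gradient (fun w' => f (Tmap w' (u ω))) (param m C)‖ ^ 2 ∂μ
      ≤ ∫ ω, M ^ 2 * ((1 + ∑ k, u ω k ^ 2) * ∑ i, (∑ j, C i j * u ω j + v i) ^ 2) ∂μ := by
    refine integral_mono_of_nonneg
      (Filter.Eventually.of_forall fun ω => by dsimp only; positivity)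
      (hInt.const_mul _) (Filter.Eventually.of_forall fun ω => ?_)
    dsimp only
    rw [hgradsq ω]
    have h1 : (0:ℝ) ≤ 1 + ∑ k, u ω k ^ 2 := by positivity
    calc (1 + ∑ k, u ω k ^ 2) * ‖gradient f (y ω)‖ ^ 2
        ≤ (1 + ∑ k, u ω k ^ 2) * (M ^ 2 * ‖y ω - zbar‖ ^ 2) :=
          mul_le_mul_of_nonneg_left (hsm ω) h1
      _ = M ^ 2 * ((1 + ∑ k, u ω k ^ 2) * ∑ i, (∑ j, C i j * u ω j + v i) ^ 2) := by
          rw [hnormy ω]; ring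
  rw [integral_const_mul, hVal] at hmono
  refine hmono.trans ?_
  rw [part1]
  have hm2 : ‖m - zbar‖ ^ 2 = ∑ i, v i ^ 2 := by
    rw [esq]
    exact Finset.sum_congr rfl fun i _ => by simp [hv, PiLp.sub_apply]
  rw [hm2]
  have hV : (0:ℝ) ≤ ∑ i, v i ^ 2 := by positivity
  have hC : (0:ℝ) ≤ ∑ i, ∑ j, C i j ^ 2 := by positivity
  have hM2 : (0:ℝ) ≤ M ^ 2 := sq_nonneg M
  nlinarith [mul_nonneg (mul_nonneg hM2 (sub_nonneg.mpr hκ1)) hV]
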